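/- For every natural number n ≥ 1, define A := {√i + √j : i, j ∈ {1,…,n}} ∪ {√i − √j : i, j ∈ {1,…,n}} ⊆ ℝ and G := {(√i + √j, √i − √j) : i, j ∈ {1,…,n}}. Then G ⊆ A × A, |G| = n², |A +_G A| = n, |A −_G A| = n, and |A ·_G A| = 2n − 1. In particular max{|A +_G A|, |A −_G A|, |A ·_G A|} ≤ 2 · |G|^(1/2). -/
import Mathlib

theorem chang_construction (n : ℕ) (hn : 1 ≤ n) :
    let I := Finset.Icc 1 n
    let A := ((I ×ˢ I).image (fun p => Real.sqrt p.1 + Real.sqrt p.2)) ∪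
             ((I ×ˢ I).image (fun p => Real.sqrt p.1 - Real.sqrt p.2))
    let G := (I ×ˢ I).image
      (fun p => (Real.sqrt p.1 + Real.sqrt p.2, Real.sqrt p.1 - Real.sqrt p.2))
    G ⊆ A ×ˢ A ∧
    G.card = n ^ 2 ∧
    (G.image (fun p => p.1 + p.2)).card = n ∧
    (G.image (fun p => p.1 - p.2)).card = n ∧
    (G.image (fun p => p.1 * p.2)).card = 2 * n - 1 ∧
    ((max (max (G.image (fun p => p.1 + p.2)).card
               (G.image (fun p => p.1 - p.2)).card)
          (G.image (fun p => p.1 * p.2)).card : ℕ) : ℝ) ≤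
      2 * (G.card : ℝ) ^ ((1 : ℝ) / 2) := by
  intro I A G
  have h1I : (1 : ℕ) ∈ I := Finset.mem_Icc.mpr ⟨le_rfl, hn⟩
  have hs : ∀ i j : ℕ, Real.sqrt i = Real.sqrt j → i = j := fun i j h =>
    Nat.cast_injective ((Real.sqrt_inj (by positivity) (by positivity)).mp h)
  have key : ∀ a b : ℕ,
      (Real.sqrt a + Real.sqrt b) * (Real.sqrt a - Real.sqrt b) = (a : ℝ) - b := by
    intro a b
    have h1 : Real.sqrt a * Real.sqrt a = (a : ℝ) := Real.mul_self_sqrt (by positivity)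
    have h2 : Real.sqrt b * Real.sqrt b = (b : ℝ) := Real.mul_self_sqrt (by positivity)
    linear_combination h1 - h2
  -- |G| = n ^ 2
  have hGcard : G.card = n ^ 2 := by
    rw [Finset.card_image_of_injOn, Finset.card_product, Nat.card_Icc]
    · have : n + 1 - 1 = n := by omega
      rw [this]; ring
    · rintro ⟨i, j⟩ _ ⟨i', j'⟩ _ h
      simp only [Prod.mk.injEq] at h ⊢
      obtain ⟨h1, h2⟩ := h
      have hi : Real.sqrt i = Real.sqrt i' := by linarith
      have hj : Real.sqrt j = Real.sqrt j' := by linarith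
      exact ⟨hs _ _ hi, hs _ _ hj⟩
  -- sum image
  have hsum : G.image (fun p => p.1 + p.2) = I.image (fun i : ℕ => 2 * Real.sqrt i) := by
    rw [Finset.image_image]
    ext x
    simp only [Finset.mem_image, Finset.mem_product, Function.comp]
    constructor
    · rintro ⟨⟨i, j⟩, ⟨hi, hj⟩, rfl⟩
      exact ⟨i, hi, by ring⟩
    · rintro ⟨i, hi, rfl⟩
      exact ⟨⟨i, 1⟩, ⟨hi, h1I⟩, by ring⟩
  have hsumc : (G.image (fun p => p.1 + p.2)).card = n := by
    rw [hsum, Finset.card_image_of_injOn, Nat.card_Icc]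
    · omega
    · intro i _ j _ h
      simp only at h
      exact hs i j (by linarith)
  -- diff image
  have hdiff : G.image (fun p => p.1 - p.2) = I.image (fun j : ℕ => 2 * Real.sqrt j) := by
    rw [Finset.image_image]
    ext x
    simp only [Finset.mem_image, Finset.mem_product, Function.comp]
    constructor
    · rintro ⟨⟨i, j⟩, ⟨hi, hj⟩, rfl⟩
      exact ⟨j, hj, by ring⟩
    · rintro ⟨j, hj, rfl⟩
      exact ⟨⟨1, j⟩, ⟨h1I, hj⟩, by ring⟩
  have hdiffc : (G.image (fun p => p.1 - p.2)).card = n := by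
    rw [hdiff, Finset.card_image_of_injOn, Nat.card_Icc]
    · omega
    · intro i _ j _ h
      simp only at h
      exact hs i j (by linarith)
  -- product image
  have hprod : G.image (fun p => p.1 * p.2) =
      (Finset.Icc (1 - (n:ℤ)) ((n:ℤ) - 1)).image (Int.cast : ℤ → ℝ) := by
    rw [Finset.image_image]
    ext x
    simp only [Finset.mem_image, Finset.mem_product, Function.comp]
    constructor
    · rintro ⟨⟨i, j⟩, ⟨hi, hj⟩, rfl⟩
      simp only [I, Finset.mem_Icc] at hi hj
      refine ⟨(i : ℤ) - j, Finset.mem_Icc.mpr ⟨by omega, by omega⟩, ?_⟩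
      push_cast
      exact (key i j).symm
    · rintro ⟨k, hk, rfl⟩
      rw [Finset.mem_Icc] at hk
      rcases le_or_gt 0 k with h | h
      · refine ⟨⟨k.toNat + 1, 1⟩, ⟨Finset.mem_Icc.mpr ⟨by omega, by omega⟩, h1I⟩, ?_⟩
        rw [key]
        push_cast
        rw [show ((k.toNat : ℕ) : ℝ) = ((k.toNat : ℤ) : ℝ) by push_cast; ring,
          Int.toNat_of_nonneg h]
        ring
      · refine ⟨⟨1, (1 - k).toNat⟩, ⟨h1I, Finset.mem_Icc.mpr ⟨by omega, by omega⟩⟩, ?_⟩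
        rw [key]
        push_cast
        rw [show (((1 - k).toNat : ℕ) : ℝ) = (((1 - k).toNat : ℤ) : ℝ) by push_cast; ring,
          Int.toNat_of_nonneg (by omega : (0:ℤ) ≤ 1 - k)]
        push_cast
        ring
  have hprodc : (G.image (fun p => p.1 * p.2)).card = 2 * n - 1 := by
    rw [hprod, Finset.card_image_of_injective _ Int.cast_injective, Int.card_Icc]
    omega
  refine ⟨?_, hGcard, hsumc, hdiffc, hprodc, ?_⟩
  · intro p hp
    simp only [G, Finset.mem_image] at hp
    obtain ⟨q, hq, rfl⟩ := hp
    rw [Finset.mem_product]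
    exact ⟨Finset.mem_union_left _ (Finset.mem_image.mpr ⟨q, hq, rfl⟩),
      Finset.mem_union_right _ (Finset.mem_image.mpr ⟨q, hq, rfl⟩)⟩
  · rw [hsumc, hdiffc, hprodc, hGcard]
    have h1 : ((n ^ 2 : ℕ) : ℝ) ^ ((1 : ℝ) / 2) = n := by
      push_cast
      rw [← Real.rpow_natCast (n : ℝ) 2, ← Real.rpow_mul (by positivity)]
      norm_num
    rw [h1]
    have h2 : max (max n n) (2 * n - 1) ≤ 2 * n := by
      refine max_le (max_le ?_ ?_) ?_ <;> omega
    calc ((max (max n n) (2 * n - 1) : ℕ) : ℝ) ≤ ((2 * n : ℕ) : ℝ) := Nat.cast_le.mpr h2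
      _ = 2 * n := by push_cast; ring
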